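/- For finite metric spaces X and Y, the Gromov–Hausdorff distance satisfies d_GH(X,Y) = (1/2) · min over all pairs (f : X → Y, g : Y → X) of the distortion of the relation R(f,g) = {(x, f(x)) : x ∈ X} ∪ {(g(y), y) : y ∈ Y}, where dis R = max over (x,y),(x',y') ∈ R of |d_X(x,x') − d_Y(y,y')|. -/

import Mathlib

/-- The distortion of a relation `R ⊆ X × Y`:
`sup` over pairs of elements of `R` of `|d_X(x,x') − d_Y(y,y')|`. -/
noncomputable def relDis {X Y : Type*} [MetricSpace X] [MetricSpace Y]
    (R : Set (X × Y)) : ℝ :=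
  ⨆ p : R × R, |dist p.1.val.1 p.2.val.1 - dist p.1.val.2 p.2.val.2|

/-- The relation `R(f,g) = {(x, f(x)) : x ∈ X} ∪ {(g(y), y) : y ∈ Y}`. -/
def mapPairRel {X Y : Type*} (f : X → Y) (g : Y → X) : Set (X × Y) :=
  {p | p.2 = f p.1} ∪ {p | p.1 = g p.2}

open Metric Set GromovHausdorff

section aux

variable {X Y : Type*} [MetricSpace X] [Fintype X] [Nonempty X]
    [MetricSpace Y] [Fintype Y] [Nonempty Y]

lemma mapPairRel_nonempty (f : X → Y) (g : Y → X) : (mapPairRel f g).Nonempty := by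
  obtain ⟨x⟩ := ‹Nonempty X›
  exact ⟨(x, f x), Or.inl rfl⟩

lemma relDis_le_of_bound {R : Set (X × Y)} (hne : R.Nonempty) {C : ℝ}
    (h : ∀ p q : R, |dist p.val.1 q.val.1 - dist p.val.2 q.val.2| ≤ C) :
    relDis R ≤ C := by
  haveI : Nonempty R := hne.to_subtype
  exact ciSup_le fun p => h p.1 p.2

lemma le_relDis {R : Set (X × Y)} (p q : R) :
    |dist p.val.1 q.val.1 - dist p.val.2 q.val.2| ≤ relDis R := by
  haveI : Finite R := Set.toFinite R
  exact le_ciSup (f := fun pq : R × R =>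
      |dist pq.1.val.1 pq.2.val.1 - dist pq.1.val.2 pq.2.val.2|)
    (Set.Finite.bddAbove (Set.finite_range _)) (⟨p, q⟩ : R × R)

lemma relDis_nonneg {R : Set (X × Y)} (hne : R.Nonempty) : 0 ≤ relDis R := by
  obtain ⟨p, hp⟩ := hne
  exact le_trans (abs_nonneg _) (le_relDis ⟨p, hp⟩ ⟨p, hp⟩)

/-- Lower bound: `ghDist ≤ relDis / 2` for any pair of maps. -/
lemma ghDist_le_half_relDis (f : X → Y) (g : Y → X) :
    ghDist X Y ≤ relDis (mapPairRel f g) / 2 := by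
  set R := mapPairRel f g with hR
  set D := relDis R with hD
  have hne : R.Nonempty := mapPairRel_nonempty f g
  haveI : Nonempty R := hne.to_subtype
  have D0 : 0 ≤ D := relDis_nonneg hne
  have key : ∀ δ : ℝ, 0 < δ → ghDist X Y ≤ D / 2 + δ := by
    intro δ δ0
    have Hb : ∀ p q : R, |dist p.val.1 q.val.1 - dist p.val.2 q.val.2| ≤ 2 * (D / 2 + δ) := by
      intro p q
      calc |dist p.val.1 q.val.1 - dist p.val.2 q.val.2| ≤ D := le_relDis p q
        _ ≤ 2 * (D / 2 + δ) := by linarith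
    letI m : MetricSpace (X ⊕ Y) :=
      glueMetricApprox (fun z : R => z.val.1) (fun z : R => z.val.2) (D / 2 + δ)
        (by linarith) Hb
    let Fl := @Sum.inl X Y
    let Fr := @Sum.inr X Y
    have Il : Isometry Fl := Isometry.of_dist_eq fun x y => rfl
    have Ir : Isometry Fr := Isometry.of_dist_eq fun x y => rfl
    have h1 : ghDist X Y ≤ hausdorffDist (range Fl) (range Fr) :=
      ghDist_le_hausdorffDist Il Ir
    have h2 : hausdorffDist (range Fl) (range Fr) ≤ D / 2 + δ := by
      refine hausdorffDist_le_of_mem_dist (by linarith) ?_ ?_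
      · rintro _ ⟨x, rfl⟩
        refine ⟨Fr (f x), mem_range_self _, ?_⟩
        exact le_of_eq (glueDist_glued_points (fun z : R => z.val.1) (fun z : R => z.val.2)
          (D / 2 + δ) ⟨(x, f x), Or.inl rfl⟩)
      · rintro _ ⟨y, rfl⟩
        refine ⟨Fl (g y), mem_range_self _, ?_⟩
        rw [dist_comm]
        exact le_of_eq (glueDist_glued_points (fun z : R => z.val.1) (fun z : R => z.val.2)
          (D / 2 + δ) ⟨(g y, y), Or.inr rfl⟩)
    linarith
  have := le_of_forall_pos_le_add (fun δ δ0 => key δ δ0)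
  linarith [this]

end aux

/-- For finite metric spaces, the Gromov–Hausdorff distance equals half the minimum,
over all pairs of maps `(f : X → Y, g : Y → X)`, of the distortion of `R(f,g)`. -/
theorem stmt0 {X Y : Type*} [MetricSpace X] [Fintype X] [Nonempty X]
    [MetricSpace Y] [Fintype Y] [Nonempty Y] :
    GromovHausdorff.ghDist X Y =
      (1 / 2) * ⨅ fg : (X → Y) × (Y → X), relDis (mapPairRel fg.1 fg.2) := by
  set I := ⨅ fg : (X → Y) × (Y → X), relDis (mapPairRel fg.1 fg.2) with hI
  have bdd : BddBelow (range fun fg : (X → Y) × (Y → X) => relDis (mapPairRel fg.1 fg.2)) := by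
    refine ⟨0, ?_⟩
    rintro _ ⟨fg, rfl⟩
    exact relDis_nonneg (mapPairRel_nonempty fg.1 fg.2)
  -- upper bound for ghDist: ghDist ≤ (1/2) * I
  have le1 : GromovHausdorff.ghDist X Y ≤ (1 / 2) * I := by
    have : (2 : ℝ) * GromovHausdorff.ghDist X Y ≤ I := by
      refine le_ciInf fun fg => ?_
      have := ghDist_le_half_relDis fg.1 fg.2
      linarith
    linarith
  -- lower bound: find f, g from an optimal embedding
  obtain ⟨Φ, Ψ, hΦ, hΨ, hdist⟩ := GromovHausdorff.ghDist_eq_hausdorffDist X Y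
  set hD := Metric.hausdorffDist (Set.range Φ) (Set.range Ψ) with hhD
  have cΦ : IsCompact (Set.range Φ) := (Set.finite_range Φ).isCompact
  have cΨ : IsCompact (Set.range Ψ) := (Set.finite_range Ψ).isCompact
  have fin : EMetric.hausdorffEdist (Set.range Φ) (Set.range Ψ) ≠ ⊤ :=
    Metric.hausdorffEdist_ne_top_of_nonempty_of_bounded (Set.range_nonempty _)
      (Set.range_nonempty _) cΦ.isBounded cΨ.isBounded
  have hf : ∀ x : X, ∃ y : Y, dist (Φ x) (Ψ y) ≤ hD := by
    intro x
    obtain ⟨z, ⟨y, rfl⟩, hz⟩ := cΨ.exists_infDist_eq_dist (Set.range_nonempty _) (Φ x)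
    exact ⟨y, by
      rw [← hz]
      exact Metric.infDist_le_hausdorffDist_of_mem (Set.mem_range_self x) fin⟩
  have hg : ∀ y : Y, ∃ x : X, dist (Φ x) (Ψ y) ≤ hD := by
    intro y
    obtain ⟨z, ⟨x, rfl⟩, hz⟩ := cΦ.exists_infDist_eq_dist (Set.range_nonempty _) (Ψ y)
    exact ⟨x, by
      rw [dist_comm, ← hz, hhD, Metric.hausdorffDist_comm]
      exact Metric.infDist_le_hausdorffDist_of_mem (Set.mem_range_self y)
        (by rw [EMetric.hausdorffEdist_comm]; exact fin)⟩
  choose f hfd using hf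
  choose g hgd using hg
  -- every element of the relation is hD-close through the embeddings
  have hclose : ∀ p : X × Y, p ∈ mapPairRel f g → dist (Φ p.1) (Ψ p.2) ≤ hD := by
    rintro ⟨a, b⟩ (h | h) <;> simp only [Set.mem_setOf_eq] at h
    · rw [h]; exact hfd a
    · rw [h]; exact hgd b
  have le2 : I ≤ 2 * GromovHausdorff.ghDist X Y := by
    have hle : relDis (mapPairRel f g) ≤ 2 * hD := by
      refine relDis_le_of_bound (mapPairRel_nonempty f g) ?_
      rintro ⟨⟨a, b⟩, hp⟩ ⟨⟨a', b'⟩, hq⟩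
      have h1 : dist (Φ a) (Ψ b) ≤ hD := hclose _ hp
      have h2 : dist (Φ a') (Ψ b') ≤ hD := hclose _ hq
      have e1 : dist a a' = dist (Φ a) (Φ a') := (hΦ.dist_eq a a').symm
      have e2 : dist b b' = dist (Ψ b) (Ψ b') := (hΨ.dist_eq b b').symm
      rw [e1, e2, abs_sub_le_iff]
      constructor
      · have := dist_triangle4 (Φ a) (Ψ b) (Ψ b') (Φ a')
        have h3 := dist_comm (Ψ b') (Φ a')
        linarith
      · have := dist_triangle4 (Ψ b) (Φ a) (Φ a') (Ψ b')
        have h3 := dist_comm (Ψ b) (Φ a)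
        linarith
    calc I ≤ relDis (mapPairRel f g) := ciInf_le bdd (f, g)
      _ ≤ 2 * hD := hle
      _ = 2 * GromovHausdorff.ghDist X Y := by rw [hdist]
  linarith
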